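/- Let T(k; B) be the total latency and suppose the optimal split k*(B) = argmin over {k : m(k) ≤ M} of T(k; B) is unique for all B in a range. If B ≤ B', and U is strictly increasing, then k*(B) ≤ k*(B'): the optimal number of edge layers is monotone nondecreasing in the bandwidth. -/
import Mathlib


/-- Monotone comparative statics: if `U` is strictly increasing and the
optimal split is unique at bandwidths `B ≤ B'`, then the optimal number of
edge layers is nondecreasing in the bandwidth. -/
theorem optimal_split_monotone_in_bandwidth
    (L : ℕ) (A U S m : ℕ → ℝ) (M ce se cs ss B B' : ℝ)
    (hce : 0 < ce) (hse : 0 < se) (hcs : 0 < cs) (hss : 0 < ss)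
    (hB : 0 < B) (hBB' : B ≤ B')
    (hA : Monotone A) (hS : Monotone S) (hU : StrictMono U)
    (T : ℕ → ℝ → ℝ)
    (hT : ∀ k b, T k b = A k / (ce * se) + U k / b + S (L - k) / (cs * ss))
    (kB kB' : ℕ)
    (hkB : kB ≤ L ∧ m kB ≤ M) (hkB' : kB' ≤ L ∧ m kB' ≤ M)
    (hoptB : ∀ k, k ≤ L → m k ≤ M → k ≠ kB → T kB B < T k B)
    (hoptB' : ∀ k, k ≤ L → m k ≤ M → k ≠ kB' → T kB' B' < T k B') :
    kB ≤ kB' := by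
  by_contra h
  push_neg at h
  have hne : kB' ≠ kB := Nat.ne_of_lt h
  have hB' : 0 < B' := lt_of_lt_of_le hB hBB'
  have h1 : T kB B < T kB' B := hoptB kB' hkB'.1 hkB'.2 hne
  have h2 : T kB' B' < T kB B' := hoptB' kB hkB.1 hkB.2 hne.symm
  have hsum : T kB B + T kB' B' < T kB' B + T kB B' := by linarith
  rw [hT, hT, hT, hT] at hsum
  have hkey : U kB / B + U kB' / B' < U kB' / B + U kB / B' := by linarith
  have hUlt : U kB' < U kB := hU h
  have hinv : 1 / B' ≤ 1 / B := one_div_le_one_div_of_le hB hBB'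
  have hpos : 0 < U kB - U kB' := sub_pos.mpr hUlt
  have hle := mul_le_mul_of_nonneg_left hinv (le_of_lt hpos)
  rw [div_eq_mul_one_div (U kB) B, div_eq_mul_one_div (U kB') B',
    div_eq_mul_one_div (U kB') B, div_eq_mul_one_div (U kB) B'] at hkey
  nlinarith [hkey, hle]
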